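/- Let F be a field of characteristic 2, and let X be the Sym(4)-set of 2-element subsets of {1,2,3,4} (equivalently, the coset space Sym(4)/Sym(2,2) for the Young subgroup Sym(2,2) = Sym{1,2} × Sym{3,4}). Then the permutation module FX over the group algebra F·Sym(4) does not have the double centraliser property, i.e. the natural map F·Sym(4) → DEnd_{F·Sym(4)}(FX) is not surjective. -/

import Mathlib

/-- The double centraliser property: every additive endomorphism of `P` commuting with all
`R`-linear endomorphisms of `P` is given by the action of an element of `R` (i.e. the natural
map `R → DEnd_R(P)` is surjective). -/
def HasDCP (R : Type*) [Ring R] (P : Type*) [AddCommGroup P] [Module R P] : Prop :=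
  ∀ σ : P →+ P, (∀ (α : P →ₗ[R] P) (p : P), σ (α p) = α (σ p)) → ∃ r : R, ∀ p : P, σ p = r • p

section Perm

variable (S : Type*) [CommRing S] (G : Type*) [Group G] (X : Type*) [MulAction G X]

/-- The action of `G` on the free module `X →₀ S` permuting the basis `X`,
as a monoid homomorphism into the endomorphism monoid. -/
noncomputable def permRep : G →* Module.End S (X →₀ S) where
  toFun g := Finsupp.lmapDomain S S (fun x => g • x)
  map_one' := by
    show Finsupp.lmapDomain S S (fun x : X => (1 : G) • x) = 1
    have : (fun x : X => (1 : G) • x) = id := funext fun x => one_smul G x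
    rw [this, Finsupp.lmapDomain_id]; rfl
  map_mul' g h := by
    show Finsupp.lmapDomain S S (fun x : X => (g * h) • x)
      = Finsupp.lmapDomain S S (fun x : X => g • x) * Finsupp.lmapDomain S S (fun x : X => h • x)
    have : (fun x : X => (g * h) • x) = (fun x => g • x) ∘ (fun x => h • x) :=
      funext fun x => mul_smul g h x
    rw [this, Finsupp.lmapDomain_comp]; rfl

/-- The algebra homomorphism `S[G] → End_S(SX)` defining the permutation module. -/
noncomputable def permAlgHom : MonoidAlgebra S G →ₐ[S] Module.End S (X →₀ S) :=
  MonoidAlgebra.lift (R := S) (M := G) (A := Module.End S (X →₀ S)) (permRep S G X)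

/-- The permutation module structure on the free `S`-module `X →₀ S` over the
group algebra `MonoidAlgebra S G`. -/
noncomputable instance permModule : Module (MonoidAlgebra S G) (X →₀ S) :=
  Module.compHom _ (permAlgHom S G X).toRingHom

lemma permModule_smul_def (r : MonoidAlgebra S G) (f : X →₀ S) :
    r • f = permAlgHom S G X r f := rfl

instance : IsScalarTower S (MonoidAlgebra S G) (X →₀ S) :=
  ⟨fun s r f => by
    rw [permModule_smul_def, permModule_smul_def, map_smul, LinearMap.smul_apply]⟩


end Perm

/-- The action of `Sym(4)` on the set of 2-element subsets of `{1,2,3,4}`. -/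
instance : MulAction (Equiv.Perm (Fin 4)) {s : Finset (Fin 4) // s.card = 2} where
  smul g s := ⟨s.1.image g, by rw [Finset.card_image_of_injective _ g.injective, s.2]⟩
  one_smul s := Subtype.ext (by
    show s.1.image ⇑(1 : Equiv.Perm (Fin 4)) = s.1
    simp)
  mul_smul g h s := Subtype.ext (by
    show s.1.image ⇑(g * h) = (s.1.image ⇑h).image ⇑g
    rw [Finset.image_image]
    rfl)


/-! ### Auxiliary material for the example -/

section Aux

/-- Abbreviation for the `Sym(4)`-set of 2-element subsets of `{1,2,3,4}`. -/
abbrev XX := {s : Finset (Fin 4) // s.card = 2}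

def S01 : XX := ⟨{0, 1}, by decide⟩
def S02 : XX := ⟨{0, 2}, by decide⟩
def S03 : XX := ⟨{0, 3}, by decide⟩
def S12 : XX := ⟨{1, 2}, by decide⟩
def S13 : XX := ⟨{1, 3}, by decide⟩
def S23 : XX := ⟨{2, 3}, by decide⟩

/-- An automorphism of the Johnson graph `J(4,2)` (a 6-cycle) that is not induced by any
permutation in `Sym(4)`. -/
def pp : XX → XX := fun t =>
  if t = S01 then S13 else if t = S02 then S12 else if t = S03 then S23
  else if t = S12 then S01 else if t = S13 then S03 else S02

/-- For each 2-subset `s`, an explicit permutation carrying `{0,1}` to `s`. -/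
def gsel : XX → Equiv.Perm (Fin 4) := fun s =>
  if s = S01 then 1 else if s = S02 then Equiv.swap 1 2 else if s = S03 then Equiv.swap 1 3
  else if s = S12 then Equiv.swap 0 2 else if s = S13 then Equiv.swap 0 3
  else Equiv.swap 0 2 * Equiv.swap 1 3

lemma hD1 : ∀ s : XX, gsel s • S01 = s := by decide

lemma hT : ∀ s : XX, s = S01 ∨ s = S02 ∨ s = S03 ∨ s = S12 ∨ s = S13 ∨ s = S23 := by decide

/-- The support of the linear functional used to detect failure of the double centraliser
property (pairs `(t, s)` of basis elements). -/
def CC : Finset (XX × XX) :=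
  {(S01, S12), (S01, S13), (S01, S23), (S02, S01), (S02, S02), (S02, S03),
   (S03, S01), (S03, S02), (S03, S03)}

lemma heven : ∀ g : Equiv.Perm (Fin 4),
    Even ((CC.filter (fun p => g • p.2 = p.1)).card) := by decide

lemma hone : ((CC.filter (fun p => pp p.2 = p.1)).card) = 1 := by decide

variable (F : Type*) [Field F]

/-- Action of a group element on the permutation module is `mapDomain`. -/
lemma hact (g : Equiv.Perm (Fin 4)) (f : XX →₀ F) :
    (MonoidAlgebra.single g (1 : F)) • f = Finsupp.mapDomain (fun x => g • x) f := by
  rw [permModule_smul_def]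
  show (MonoidAlgebra.lift (R := F) (M := Equiv.Perm (Fin 4)) (A := Module.End F (XX →₀ F))
    (permRep F (Equiv.Perm (Fin 4)) XX)) (MonoidAlgebra.single g 1) f = _
  rw [MonoidAlgebra.lift_single, one_smul]
  rfl

end Aux

/-- **Section 7, example.** Let `F` be a field of characteristic `2` and let `X` be the
`Sym(4)`-set of 2-element subsets of `{1,2,3,4}` (the coset space `Sym(4)/Sym(2,2)`).  Then
the permutation module `FX` over the group algebra `F·Sym(4)` does not have the double
centraliser property. -/
theorem young22_not_hasDCP_char_two
    (F : Type*) [Field F] [CharP F 2] :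
    ¬ HasDCP (MonoidAlgebra F (Equiv.Perm (Fin 4)))
        ({s : Finset (Fin 4) // s.card = 2} →₀ F) := by
  intro h
  classical
  -- the additive endomorphism given by the extra graph automorphism `pp`
  obtain ⟨r, hr⟩ := h (Finsupp.mapDomain.addMonoidHom pp) (by
    intro α p
    show Finsupp.mapDomain pp (α p) = α (Finsupp.mapDomain pp p)
    set v := α (Finsupp.single S01 (1 : F)) with hvdef
    have hsingle : ∀ s : XX,
        α (Finsupp.single s (1 : F)) = Finsupp.mapDomain (fun x => gsel s • x) v := by
      intro s
      have h1 : MonoidAlgebra.single (gsel s) (1 : F) • (Finsupp.single S01 (1 : F) : XX →₀ F)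
          = Finsupp.single s (1 : F) := by
        simp only [hact, Finsupp.mapDomain_single]
        rw [hD1]
      rw [← h1, map_smul, hact]
    have hinv : ∀ τ : Equiv.Perm (Fin 4), τ • S01 = S01 →
        Finsupp.mapDomain (fun x => τ • x) v = v := by
      intro τ hτ
      rw [← hact, hvdef, ← map_smul]
      congr 1
      simp only [hact, Finsupp.mapDomain_single]
      rw [hτ]
    have ht1 := hinv (Equiv.swap 0 1) (by decide)
    have ht2 := hinv (Equiv.swap 2 3) (by decide)
    have hco : ∀ τ : Equiv.Perm (Fin 4), Finsupp.mapDomain (fun x => τ • x) v = v →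
        ∀ t : XX, v (τ • t) = v t := by
      intro τ hτ t
      have hh := Finsupp.mapDomain_apply (f := fun x : XX => τ • x)
        (MulAction.injective τ) v t
      rw [hτ] at hh
      simpa using hh
    have e1 : v S12 = v S02 := by
      have := hco _ ht1 S02
      rwa [show (Equiv.swap 0 1 : Equiv.Perm (Fin 4)) • S02 = S12 by decide] at this
    have e2 : v S13 = v S03 := by
      have := hco _ ht1 S03
      rwa [show (Equiv.swap 0 1 : Equiv.Perm (Fin 4)) • S03 = S13 by decide] at this
    have e3 : v S03 = v S02 := by
      have := hco _ ht2 S02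
      rwa [show (Equiv.swap 2 3 : Equiv.Perm (Fin 4)) • S02 = S03 by decide] at this
    have hv : v = Finsupp.single S01 (v S01) + Finsupp.single S23 (v S23)
        + Finsupp.single S02 (v S02) + Finsupp.single S03 (v S02)
        + Finsupp.single S12 (v S02) + Finsupp.single S13 (v S02) := by
      ext t
      rcases hT t with rfl | rfl | rfl | rfl | rfl | rfl
      · simp only [Finsupp.add_apply, Finsupp.single_eq_same, Finsupp.single_eq_of_ne' (show S23 ≠ S01 by decide), Finsupp.single_eq_of_ne' (show S02 ≠ S01 by decide), Finsupp.single_eq_of_ne' (show S03 ≠ S01 by decide), Finsupp.single_eq_of_ne' (show S12 ≠ S01 by decide), Finsupp.single_eq_of_ne' (show S13 ≠ S01 by decide), add_zero, zero_add]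
      · simp only [Finsupp.add_apply, Finsupp.single_eq_same, Finsupp.single_eq_of_ne' (show S01 ≠ S02 by decide), Finsupp.single_eq_of_ne' (show S23 ≠ S02 by decide), Finsupp.single_eq_of_ne' (show S03 ≠ S02 by decide), Finsupp.single_eq_of_ne' (show S12 ≠ S02 by decide), Finsupp.single_eq_of_ne' (show S13 ≠ S02 by decide), add_zero, zero_add]
      · simp only [Finsupp.add_apply, Finsupp.single_eq_same, Finsupp.single_eq_of_ne' (show S01 ≠ S03 by decide), Finsupp.single_eq_of_ne' (show S23 ≠ S03 by decide), Finsupp.single_eq_of_ne' (show S02 ≠ S03 by decide), Finsupp.single_eq_of_ne' (show S12 ≠ S03 by decide), Finsupp.single_eq_of_ne' (show S13 ≠ S03 by decide), add_zero, zero_add]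
        exact e3
      · simp only [Finsupp.add_apply, Finsupp.single_eq_same, Finsupp.single_eq_of_ne' (show S01 ≠ S12 by decide), Finsupp.single_eq_of_ne' (show S23 ≠ S12 by decide), Finsupp.single_eq_of_ne' (show S02 ≠ S12 by decide), Finsupp.single_eq_of_ne' (show S03 ≠ S12 by decide), Finsupp.single_eq_of_ne' (show S13 ≠ S12 by decide), add_zero, zero_add]
        exact e1
      · simp only [Finsupp.add_apply, Finsupp.single_eq_same, Finsupp.single_eq_of_ne' (show S01 ≠ S13 by decide), Finsupp.single_eq_of_ne' (show S23 ≠ S13 by decide), Finsupp.single_eq_of_ne' (show S02 ≠ S13 by decide), Finsupp.single_eq_of_ne' (show S03 ≠ S13 by decide), Finsupp.single_eq_of_ne' (show S12 ≠ S13 by decide), add_zero, zero_add]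
        exact e2.trans e3
      · simp only [Finsupp.add_apply, Finsupp.single_eq_same, Finsupp.single_eq_of_ne' (show S01 ≠ S23 by decide), Finsupp.single_eq_of_ne' (show S02 ≠ S23 by decide), Finsupp.single_eq_of_ne' (show S03 ≠ S23 by decide), Finsupp.single_eq_of_ne' (show S12 ≠ S23 by decide), Finsupp.single_eq_of_ne' (show S13 ≠ S23 by decide), add_zero, zero_add]
    induction p using Finsupp.induction_linear with
    | zero => simp
    | add f g hf hg => simp only [map_add, Finsupp.mapDomain_add, hf, hg]
    | single s b =>
      have hb : (Finsupp.single s b : XX →₀ F) = b • Finsupp.single s (1 : F) := by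
        rw [Finsupp.smul_single, smul_eq_mul, mul_one]
      rw [hb, Finsupp.mapDomain_smul, LinearMap.map_smul_of_tower, LinearMap.map_smul_of_tower,
        Finsupp.mapDomain_smul]
      congr 1
      rw [Finsupp.mapDomain_single, hsingle s, hsingle (pp s)]
      rcases hT s with rfl | rfl | rfl | rfl | rfl | rfl
      · rw [hv]
        simp only [Finsupp.mapDomain_add, Finsupp.mapDomain_single,
        show pp (gsel S01 • S01) = S13 by decide,
          show pp (gsel S01 • S02) = S12 by decide,
          show pp (gsel S01 • S03) = S23 by decide,
          show pp (gsel S01 • S12) = S01 by decide,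
          show pp (gsel S01 • S13) = S03 by decide,
          show pp (gsel S01 • S23) = S02 by decide,
          show gsel (pp S01) • S01 = S13 by decide,
          show gsel (pp S01) • S02 = S23 by decide,
          show gsel (pp S01) • S03 = S03 by decide,
          show gsel (pp S01) • S12 = S12 by decide,
          show gsel (pp S01) • S13 = S01 by decide,
          show gsel (pp S01) • S23 = S02 by decide]
        abel
      · rw [hv]
        simp only [Finsupp.mapDomain_add, Finsupp.mapDomain_single,
        show pp (gsel S02 • S01) = S12 by decide,
          show pp (gsel S02 • S02) = S13 by decide,
          show pp (gsel S02 • S03) = S23 by decide,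
          show pp (gsel S02 • S12) = S01 by decide,
          show pp (gsel S02 • S13) = S02 by decide,
          show pp (gsel S02 • S23) = S03 by decide,
          show gsel (pp S02) • S01 = S12 by decide,
          show gsel (pp S02) • S02 = S02 by decide,
          show gsel (pp S02) • S03 = S23 by decide,
          show gsel (pp S02) • S12 = S01 by decide,
          show gsel (pp S02) • S13 = S13 by decide,
          show gsel (pp S02) • S23 = S03 by decide]
        abel
      · rw [hv]
        simp only [Finsupp.mapDomain_add, Finsupp.mapDomain_single,
        show pp (gsel S03 • S01) = S23 by decide,
          show pp (gsel S03 • S02) = S12 by decide,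
          show pp (gsel S03 • S03) = S13 by decide,
          show pp (gsel S03 • S12) = S02 by decide,
          show pp (gsel S03 • S13) = S03 by decide,
          show pp (gsel S03 • S23) = S01 by decide,
          show gsel (pp S03) • S01 = S23 by decide,
          show gsel (pp S03) • S02 = S02 by decide,
          show gsel (pp S03) • S03 = S12 by decide,
          show gsel (pp S03) • S12 = S03 by decide,
          show gsel (pp S03) • S13 = S13 by decide,
          show gsel (pp S03) • S23 = S01 by decide]
        abel
      · rw [hv]
        simp only [Finsupp.mapDomain_add, Finsupp.mapDomain_single,
        show pp (gsel S12 • S01) = S01 by decide,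
          show pp (gsel S12 • S02) = S12 by decide,
          show pp (gsel S12 • S03) = S02 by decide,
          show pp (gsel S12 • S12) = S13 by decide,
          show pp (gsel S12 • S13) = S03 by decide,
          show pp (gsel S12 • S23) = S23 by decide,
          show gsel (pp S12) • S01 = S01 by decide,
          show gsel (pp S12) • S02 = S02 by decide,
          show gsel (pp S12) • S03 = S03 by decide,
          show gsel (pp S12) • S12 = S12 by decide,
          show gsel (pp S12) • S13 = S13 by decide,
          show gsel (pp S12) • S23 = S23 by decide]
        abel
      · rw [hv]
        simp only [Finsupp.mapDomain_add, Finsupp.mapDomain_single,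
        show pp (gsel S13 • S01) = S03 by decide,
          show pp (gsel S13 • S02) = S02 by decide,
          show pp (gsel S13 • S03) = S23 by decide,
          show pp (gsel S13 • S12) = S01 by decide,
          show pp (gsel S13 • S13) = S13 by decide,
          show pp (gsel S13 • S23) = S12 by decide,
          show gsel (pp S13) • S01 = S03 by decide,
          show gsel (pp S13) • S02 = S02 by decide,
          show gsel (pp S13) • S03 = S01 by decide,
          show gsel (pp S13) • S12 = S23 by decide,
          show gsel (pp S13) • S13 = S13 by decide,
          show gsel (pp S13) • S23 = S12 by decide]
        abel
      · rw [hv]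
        simp only [Finsupp.mapDomain_add, Finsupp.mapDomain_single,
        show pp (gsel S23 • S01) = S02 by decide,
          show pp (gsel S23 • S02) = S12 by decide,
          show pp (gsel S23 • S03) = S01 by decide,
          show pp (gsel S23 • S12) = S23 by decide,
          show pp (gsel S23 • S13) = S03 by decide,
          show pp (gsel S23 • S23) = S13 by decide,
          show gsel (pp S23) • S01 = S02 by decide,
          show gsel (pp S23) • S02 = S01 by decide,
          show gsel (pp S23) • S03 = S03 by decide,
          show gsel (pp S23) • S12 = S12 by decide,
          show gsel (pp S23) • S13 = S23 by decide,
          show gsel (pp S23) • S23 = S13 by decide]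
        abel
    )
  -- the detecting functional
  have hzero : ∀ q : MonoidAlgebra F (Equiv.Perm (Fin 4)),
      ∑ p ∈ CC, (q • Finsupp.single p.2 (1 : F)) p.1 = 0 := by
    intro q
    induction q using MonoidAlgebra.induction_linear with
    | zero => simp
    | add f g hf hg =>
      simp only [add_smul, Finsupp.add_apply, Finset.sum_add_distrib, hf, hg, add_zero]
    | single g b =>
      have hb : (MonoidAlgebra.single g b : MonoidAlgebra F (Equiv.Perm (Fin 4)))
          = b • MonoidAlgebra.single g (1 : F) := by
        rw [MonoidAlgebra.smul_single', mul_one]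
      rw [hb]
      simp only [smul_assoc, hact, Finsupp.mapDomain_single, Finsupp.smul_apply,
        smul_eq_mul, Finsupp.single_apply]
      rw [← Finset.mul_sum, Finset.sum_boole]
      obtain ⟨m, hm⟩ := heven g
      rw [hm]
      push_cast
      rw [show ((m : F) + m) = 2 * m by ring,
        show (2 : F) = 0 from by exact_mod_cast (CharP.cast_eq_zero F 2), zero_mul, mul_zero]
  have h1 : ∑ p ∈ CC,
      ((Finsupp.mapDomain.addMonoidHom pp : (XX →₀ F) →+ (XX →₀ F))
        (Finsupp.single p.2 (1 : F))) p.1 = 1 := by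
    have : ∀ p : XX × XX,
        ((Finsupp.mapDomain.addMonoidHom pp : (XX →₀ F) →+ (XX →₀ F))
          (Finsupp.single p.2 (1 : F))) p.1
        = if pp p.2 = p.1 then (1 : F) else 0 := by
      intro p
      show (Finsupp.mapDomain pp (Finsupp.single p.2 (1 : F))) p.1 = _
      rw [Finsupp.mapDomain_single, Finsupp.single_apply]
    rw [Finset.sum_congr rfl (fun p _ => this p), Finset.sum_boole, hone, Nat.cast_one]
  rw [Finset.sum_congr rfl (fun p _ => by rw [hr])] at h1
  rw [hzero r] at h1
  exact one_ne_zero h1.symm
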